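/- arXiv:0810.5177 — 5 statements merged into one kernel-verified Lean document; each statement's English description precedes it below -/
import Mathlib

section
/- Assume $B + E = A$ and that $B \cap E$ is finite, of cardinality $n$. Then for every $G$-fixed element $a \in A^G$, the element $n\cdot a$ lies in $B^G + E^G$; equivalently, the quotient group $A^G/(B^G + E^G)$ is annihilated by $n = |B \cap E|$. -/
/-- Let `G` act on an abelian group `A` by additive automorphisms and
let `B`, `E` be `G`-stable subgroups with `B + E = A` and `B ∩ E` finite of cardinality
`n`.  Then for every `G`-fixed `a ∈ A`, the element `n • a` lies in `Bᴳ + Eᴳ`,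
i.e. `n • a = b + e` with `b ∈ B`, `e ∈ E` both `G`-fixed. -/
theorem stmt1 {G A : Type*} [Group G] [AddCommGroup A] [DistribMulAction G A]
    (B E : AddSubgroup A)
    (hB : ∀ (g : G), ∀ x ∈ B, g • x ∈ B)
    (hE : ∀ (g : G), ∀ x ∈ E, g • x ∈ E)
    (hBE : B ⊔ E = ⊤)
    (hfin : Finite ↥(B ⊓ E)) (n : ℕ) (hn : Nat.card ↥(B ⊓ E) = n)
    (a : A) (ha : ∀ g : G, g • a = a) :
    ∃ b ∈ B, ∃ e ∈ E, (∀ g : G, g • b = b) ∧ (∀ g : G, g • e = e) ∧ n • a = b + e := by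
  have hmem : a ∈ B ⊔ E := hBE ▸ AddSubgroup.mem_top a
  rw [AddSubgroup.mem_sup] at hmem
  obtain ⟨b, hb, e, he, hbe⟩ := hmem
  have key : ∀ x ∈ B ⊓ E, n • x = 0 := by
    intro x hx
    have h : n • (⟨x, hx⟩ : ↥(B ⊓ E)) = 0 := by
      rw [← hn]; exact card_nsmul_eq_zero'
    simpa using congrArg Subtype.val h
  have h1 : ∀ g : G, g • b + g • e = b + e := by
    intro g
    rw [← smul_add, hbe]; exact ha g
  have hcocb : ∀ g : G, g • b - b ∈ B ⊓ E := by
    intro g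
    refine AddSubgroup.mem_inf.mpr ⟨sub_mem (hB g b hb) hb, ?_⟩
    have h2 : g • b - b = e - g • e := by
      rw [sub_eq_sub_iff_add_eq_add, add_comm e b, h1 g, add_comm b e]
    rw [h2]
    exact sub_mem he (hE g e he)
  have hcoce : ∀ g : G, g • e - e ∈ B ⊓ E := by
    intro g
    refine AddSubgroup.mem_inf.mpr ⟨?_, sub_mem (hE g e he) he⟩
    have h2 : g • e - e = b - g • b := by
      rw [sub_eq_sub_iff_add_eq_add, add_comm (g • e) (g • b), h1 g, add_comm b e]
    rw [h2]
    exact sub_mem hb (hB g b hb)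
  refine ⟨n • b, nsmul_mem hb n, n • e, nsmul_mem he n, ?_, ?_, ?_⟩
  · intro g
    have h0 := key _ (hcocb g)
    rw [smul_sub, sub_eq_zero] at h0
    rw [smul_comm, h0]
  · intro g
    have h0 := key _ (hcoce g)
    rw [smul_sub, sub_eq_zero] at h0
    rw [smul_comm, h0]
  · rw [← hbe, smul_add]
end

section
/- (Abstract form of Lemma 3.1 of the paper.) Assume $B + E = A$ and that $B \cap E$ is finite. If $q$ is a prime number that divides the order of some finite-order element of the quotient group $A^G/(B^G + E^G)$, then $q$ divides the cardinality $|B \cap E|$. -/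
/-- The subgroup of `G`-fixed points of an abelian group `A` with `G` acting by
additive automorphisms. -/
def fixedPts (G A : Type*) [Group G] [AddCommGroup A] [DistribMulAction G A] :
    AddSubgroup A where
  carrier := {a | ∀ g : G, g • a = a}
  zero_mem' := fun g => smul_zero g
  add_mem' := fun ha hb g => by rw [smul_add, ha g, hb g]
  neg_mem' := fun ha g => by rw [smul_neg, ha g]

/-- abstract form of Lemma 3.1 of the paper.  Let `G` act on an
abelian group `A` by additive automorphisms, let `B`, `E` be `G`-stable subgroups with
`B + E = A` and `B ∩ E` finite.  If a prime `q` divides the order of some finite-order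
element of `Aᴳ/(Bᴳ + Eᴳ)`, then `q` divides `|B ∩ E|`. -/
theorem stmt2 {G A : Type*} [Group G] [AddCommGroup A] [DistribMulAction G A]
    (B E : AddSubgroup A)
    (hB : ∀ (g : G), ∀ x ∈ B, g • x ∈ B)
    (hE : ∀ (g : G), ∀ x ∈ E, g • x ∈ E)
    (hBE : B ⊔ E = ⊤)
    (hfin : Finite ↥(B ⊓ E))
    (q : ℕ) (hq : q.Prime)
    (x : ↥(fixedPts G A) ⧸
      (B.addSubgroupOf (fixedPts G A) ⊔ E.addSubgroupOf (fixedPts G A)))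
    (hx : IsOfFinAddOrder x) (hqx : q ∣ addOrderOf x) :
    q ∣ Nat.card ↥(B ⊓ E) := by
  set n := Nat.card ↥(B ⊓ E) with hndef
  have key : n • x = 0 := by
    induction x using QuotientAddGroup.induction_on with
    | H a =>
      rw [← QuotientAddGroup.mk_nsmul, QuotientAddGroup.eq_zero_iff]
      have hatop : (a : A) ∈ B ⊔ E := hBE ▸ AddSubgroup.mem_top _
      obtain ⟨b, hb, e, he, hbe⟩ := AddSubgroup.mem_sup.mp hatop
      have hfix : ∀ g : G, g • (a : A) = a := a.2
      have hmem : ∀ g : G, g • b - b ∈ B ⊓ E := by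
        intro g
        refine ⟨AddSubgroup.sub_mem _ (hB g b hb) hb, ?_⟩
        have h1 : g • b - b = e - g • e := by
          have := hfix g
          rw [← hbe, smul_add] at this
          linear_combination (norm := abel) this
        rw [h1]
        exact AddSubgroup.sub_mem _ he (hE g e he)
      have hzero : ∀ c ∈ B ⊓ E, n • c = 0 := by
        intro c hc
        have : n • (⟨c, hc⟩ : ↥(B ⊓ E)) = 0 := card_nsmul_eq_zero'
        simpa using congrArg Subtype.val this
      have hcomm : ∀ (g : G) (m : ℕ) (y : A), g • (m • y) = m • (g • y) :=
        fun g m y => (DistribMulAction.toAddMonoidHom A g).map_nsmul m y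
      have hnB : n • b ∈ fixedPts G A := by
        intro g
        have h1 : g • (n • b) - n • b = n • (g • b - b) := by
          rw [hcomm, smul_sub]
        have h2 : g • (n • b) - n • b = 0 := by rw [h1, hzero _ (hmem g)]
        exact sub_eq_zero.mp h2
      have hnE : n • e ∈ fixedPts G A := by
        intro g
        have hgb : g • (n • (a : A)) = n • (a : A) := by rw [hcomm, hfix g]
        have hab : n • (a : A) = n • b + n • e := by rw [← hbe, smul_add]
        have h1 : g • (n • b) + g • (n • e) = n • b + n • e := by
          rw [← smul_add, ← hab, hgb, hab]
        rw [hnB g] at h1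
        exact add_left_cancel h1
      have hsum : n • a = (⟨n • b, hnB⟩ : ↥(fixedPts G A)) + ⟨n • e, hnE⟩ := by
        ext
        push_cast
        rw [← smul_add, hbe]
      rw [hsum]
      exact AddSubgroup.add_mem _
        (AddSubgroup.mem_sup_left (by simpa [AddSubgroup.mem_addSubgroupOf] using B.nsmul_mem hb n))
        (AddSubgroup.mem_sup_right (by simpa [AddSubgroup.mem_addSubgroupOf] using E.nsmul_mem he n))
  exact hqx.trans (addOrderOf_dvd_of_nsmul_eq_zero key)
end

section
/- Assume $B + E = A$ and that $B \cap E$ is finite, of cardinality $n$. Let $c : G \to B$ be a 1-cocycle with values in $B$ such that $c$ becomes a coboundary in $A$, i.e. there exists $a \in A$ with $c(g) = g\cdot a - a$ for all $g \in G$. Then $n\cdot c$ is a coboundary in $B$: there exists $b \in B$ with $n\cdot c(g) = g\cdot b - b$ for all $g \in G$. -/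
/-- Let `G` act on an abelian group `A` by additive automorphisms and
let `B`, `E` be `G`-stable subgroups with `B + E = A` and `B ∩ E` finite of cardinality
`n`.  If `c : G → A` is a 1-cocycle with values in `B` which is a coboundary in `A`
(say `c g = g • a - a`), then `n • c` is a coboundary in `B`: there is `b ∈ B` with
`n • c g = g • b - b` for all `g`. -/
theorem stmt5 {G A : Type*} [Group G] [AddCommGroup A] [DistribMulAction G A]
    (B E : AddSubgroup A)
    (hB : ∀ (g : G), ∀ x ∈ B, g • x ∈ B)
    (hE : ∀ (g : G), ∀ x ∈ E, g • x ∈ E)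
    (hBE : B ⊔ E = ⊤)
    (hfin : Finite ↥(B ⊓ E)) (n : ℕ) (hn : Nat.card ↥(B ⊓ E) = n)
    (c : G → A)
    (hcB : ∀ g : G, c g ∈ B)
    (hcoc : ∀ g h : G, c (g * h) = c g + g • c h)
    (a : A) (ha : ∀ g : G, c g = g • a - a) :
    ∃ b ∈ B, ∀ g : G, n • c g = g • b - b := by
  have haBE : a ∈ B ⊔ E := hBE ▸ AddSubgroup.mem_top a
  rw [AddSubgroup.mem_sup] at haBE
  obtain ⟨b₀, hb₀, e, he, hae⟩ := haBE
  refine ⟨n • b₀, AddSubgroup.nsmul_mem B hb₀ n, fun g => ?_⟩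
  -- g • e - e ∈ B ⊓ E
  have key : g • e - e ∈ B ⊓ E := by
    constructor
    · have : g • e - e = c g - (g • b₀ - b₀) := by
        rw [ha g, ← hae]
        rw [smul_add]
        abel
      rw [this]
      exact AddSubgroup.sub_mem B (hcB g) (AddSubgroup.sub_mem B (hB g b₀ hb₀) hb₀)
    · exact AddSubgroup.sub_mem E (hE g e he) he
  have hzero : n • (g • e - e) = 0 := by
    have := card_nsmul_eq_zero' (G := ↥(B ⊓ E)) (x := ⟨_, key⟩)
    rw [hn] at this
    have := congrArg (Subtype.val) this
    simpa using this
  have hcg : c g = (g • b₀ - b₀) + (g • e - e) := by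
    rw [ha g, ← hae, smul_add]; abel
  rw [hcg, nsmul_add, hzero, add_zero, nsmul_sub, smul_comm]
end

section
/- (Cocycle form of Lemma 3.2 of the paper.) Assume $B + E = A$ and that $B \cap E$ is finite. Let $q$ be a prime number and let $c : G \to B$ be a 1-cocycle with values in $B$ such that: (i) $c$ is a coboundary in $A$ (there exists $a \in A$ with $c(g) = g\cdot a - a$ for all $g$); (ii) $c$ is not a coboundary in $B$; and (iii) $q\cdot c$ is a coboundary in $B$. Then $q$ divides the cardinality $|B \cap E|$. -/
/-- cocycle form of Lemma 3.2 of the paper.  Let `G` act on an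
abelian group `A` by additive automorphisms and let `B`, `E` be `G`-stable subgroups
with `B + E = A` and `B ∩ E` finite.  Let `q` be a prime and `c : G → A` a 1-cocycle
with values in `B` such that (i) `c` is a coboundary in `A`, (ii) `c` is not a
coboundary in `B`, and (iii) `q • c` is a coboundary in `B`.  Then `q ∣ |B ∩ E|`. -/
theorem stmt6 {G A : Type*} [Group G] [AddCommGroup A] [DistribMulAction G A]
    (B E : AddSubgroup A)
    (hB : ∀ (g : G), ∀ x ∈ B, g • x ∈ B)
    (hE : ∀ (g : G), ∀ x ∈ E, g • x ∈ E)
    (hBE : B ⊔ E = ⊤)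
    (hfin : Finite ↥(B ⊓ E))
    (q : ℕ) (hq : q.Prime)
    (c : G → A)
    (hcB : ∀ g : G, c g ∈ B)
    (hcoc : ∀ g h : G, c (g * h) = c g + g • c h)
    (hcobA : ∃ a : A, ∀ g : G, c g = g • a - a)
    (hncobB : ¬ ∃ b ∈ B, ∀ g : G, c g = g • b - b)
    (hqcobB : ∃ b ∈ B, ∀ g : G, q • c g = g • b - b) :
    q ∣ Nat.card ↥(B ⊓ E) := by
  by_contra hnd
  set n : ℕ := Nat.card ↥(B ⊓ E) with hn
  -- coprimality: get Bézout coefficients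
  have hcop : IsCoprime (q : ℤ) (n : ℤ) := by
    rw [Int.isCoprime_iff_gcd_eq_one, Int.gcd_natCast_natCast]
    exact (Nat.Prime.coprime_iff_not_dvd hq).mpr hnd
  obtain ⟨u, v, huv⟩ := hcop
  obtain ⟨a, ha⟩ := hcobA
  obtain ⟨b', hb'B, hb'⟩ := hqcobB
  -- decompose a = b₀ + e₀
  have haT : a ∈ B ⊔ E := by rw [hBE]; trivial
  obtain ⟨b₀, hb₀B, e₀, he₀E, hbe⟩ := AddSubgroup.mem_sup.mp haT
  -- the difference cocycle d g lands in B ⊓ E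
  have hd : ∀ g : G, c g - (g • b₀ - b₀) ∈ B ⊓ E := by
    intro g
    constructor
    · exact AddSubgroup.sub_mem B (hcB g) (AddSubgroup.sub_mem B (hB g b₀ hb₀B) hb₀B)
    · have : c g - (g • b₀ - b₀) = g • e₀ - e₀ := by
        have := ha g
        rw [← hbe] at this
        rw [this, smul_add]
        abel
      rw [this]
      exact AddSubgroup.sub_mem E (hE g e₀ he₀E) he₀E
  -- n kills B ⊓ E
  have hnkill : ∀ g : G, (n : ℤ) • (c g - (g • b₀ - b₀)) = 0 := by
    intro g
    have : (n : ℤ) • (⟨c g - (g • b₀ - b₀), hd g⟩ : ↥(B ⊓ E)) = 0 := by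
      rw [natCast_zsmul]
      exact card_nsmul_eq_zero'
    have := congrArg (Subtype.val) this
    simpa using this
  apply hncobB
  refine ⟨u • b' + (v * n) • b₀, ?_, ?_⟩
  · exact AddSubgroup.add_mem B (AddSubgroup.zsmul_mem B hb'B u)
      (AddSubgroup.zsmul_mem B hb₀B (v * n))
  · intro g
    have hsmulz : ∀ (z : ℤ) (x : A), g • (z • x) = z • (g • x) := fun z x =>
      map_zsmul (DistribMulAction.toAddMonoidHom A g) z x
    have h1 : c g = (u * q) • c g + (v * n) • c g := by
      rw [← add_smul, huv, one_smul]
    have h2 : (u * q : ℤ) • c g = u • (g • b' - b') := by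
      rw [mul_smul, natCast_zsmul, hb' g]
    have h3 : (v * n : ℤ) • c g = (v * n) • (g • b₀ - b₀) := by
      have : (v * n : ℤ) • (c g - (g • b₀ - b₀)) = 0 := by
        rw [mul_smul, hnkill g, smul_zero]
      rw [smul_sub] at this
      linear_combination (norm := abel) this
    rw [h1, h2, h3, smul_add, hsmulz, hsmulz, smul_sub, smul_sub]
    abel
end

section
/- (Abstract form of Lemma 3.2 of the paper.) Assume $B + E = A$ and that $B \cap E$ is finite. If $q$ is a prime number that divides the order of some finite-order element of $\ker\big(H^1(G, B) \to H^1(G, A)\big)$, where the map on cohomology is induced by the inclusion $B \hookrightarrow A$, then $q$ divides the cardinality $|B \cap E|$. -/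
variable (G : Type*) [Group G]

/-- 1-cocycles `c : G → A` with values in the subgroup `S`. -/
def cocyclesIn (A : Type*) [AddCommGroup A] [DistribMulAction G A] (S : AddSubgroup A) :
    AddSubgroup (G → A) where
  carrier := {c | (∀ g : G, c g ∈ S) ∧ ∀ g h : G, c (g * h) = c g + g • c h}
  zero_mem' := ⟨fun _ => S.zero_mem, by intro g h; simp⟩
  add_mem' := by
    rintro c d ⟨hcS, hc⟩ ⟨hdS, hd⟩
    refine ⟨fun g => S.add_mem (hcS g) (hdS g), fun g h => ?_⟩
    simp only [Pi.add_apply, hc g h, hd g h, smul_add]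
    abel
  neg_mem' := by
    rintro c ⟨hcS, hc⟩
    refine ⟨fun g => S.neg_mem (hcS g), fun g h => ?_⟩
    simp only [Pi.neg_apply, hc g h, smul_neg]
    abel

/-- 1-coboundaries of elements of the subgroup `S`. -/
def coboundariesIn (A : Type*) [AddCommGroup A] [DistribMulAction G A] (S : AddSubgroup A) :
    AddSubgroup (G → A) where
  carrier := {c | ∃ s ∈ S, ∀ g : G, c g = g • s - s}
  zero_mem' := ⟨0, S.zero_mem, by simp⟩
  add_mem' := by
    rintro c d ⟨s, hs, hcs⟩ ⟨t, ht, hdt⟩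
    refine ⟨s + t, S.add_mem hs ht, fun g => ?_⟩
    simp only [Pi.add_apply, hcs g, hdt g, smul_add]
    abel
  neg_mem' := by
    rintro c ⟨s, hs, hcs⟩
    refine ⟨-s, S.neg_mem hs, fun g => ?_⟩
    simp only [Pi.neg_apply, hcs g, smul_neg]
    abel

/-- First group cohomology `H¹(G, S)` of a `G`-stable subgroup `S ⊆ A`:
1-cocycles with values in `S` modulo 1-coboundaries of elements of `S`. -/
abbrev H1In (A : Type*) [AddCommGroup A] [DistribMulAction G A] (S : AddSubgroup A) :=
  cocyclesIn G A S ⧸ (coboundariesIn G A S).addSubgroupOf (cocyclesIn G A S)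

/-- The map `H¹(G, S) →+ H¹(G, S')` induced by a `G`-equivariant homomorphism
`φ : A →+ A'` carrying `S` into `S'`. -/
def H1InMap {A A' : Type*} [AddCommGroup A] [DistribMulAction G A]
    [AddCommGroup A'] [DistribMulAction G A'] (φ : A →+ A')
    (hφ : ∀ (g : G) (a : A), φ (g • a) = g • φ a)
    (S : AddSubgroup A) (S' : AddSubgroup A') (hS : ∀ a ∈ S, φ a ∈ S') :
    H1In G A S →+ H1In G A' S' :=
  QuotientAddGroup.map _ _
    ({ toFun := fun c =>
        ⟨fun g => φ (c.1 g),
          ⟨fun g => hS _ (c.2.1 g), fun g h => by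
            show φ (c.1 (g * h)) = φ (c.1 g) + g • φ (c.1 h)
            rw [c.2.2 g h, map_add, hφ]⟩⟩
       map_zero' := by ext g; simp
       map_add' := fun c d => by ext g; simp } :
      ↥(cocyclesIn G A S) →+ ↥(cocyclesIn G A' S'))
    (by
      intro c hc
      rw [AddSubgroup.mem_addSubgroupOf] at hc
      obtain ⟨s, hs, hcs⟩ := hc
      rw [AddSubgroup.mem_comap, AddSubgroup.mem_addSubgroupOf]
      exact ⟨φ s, hS s hs, fun g => by simp [hcs g, hφ]⟩)

/-- abstract form of Lemma 3.2 of the paper.  Let `G` act on an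
abelian group `A` by additive automorphisms and let `B`, `E` be `G`-stable subgroups
with `B + E = A` and `B ∩ E` finite.  If a prime `q` divides the order of some
finite-order element of `ker (H¹(G, B) → H¹(G, A))` (map induced by the inclusion
`B ↪ A`), then `q` divides `|B ∩ E|`. -/
theorem stmt7 {G A : Type*} [Group G] [AddCommGroup A] [DistribMulAction G A]
    (B E : AddSubgroup A)
    (hB : ∀ (g : G), ∀ x ∈ B, g • x ∈ B)
    (hE : ∀ (g : G), ∀ x ∈ E, g • x ∈ E)
    (hBE : B ⊔ E = ⊤)
    (hfin : Finite ↥(B ⊓ E))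
    (q : ℕ) (hq : q.Prime)
    (x : H1In G A B)
    (hx : H1InMap G (AddMonoidHom.id A) (fun _ _ => rfl) B ⊤
      (fun a _ => AddSubgroup.mem_top a) x = 0)
    (hfo : IsOfFinAddOrder x) (hqx : q ∣ addOrderOf x) :
    q ∣ Nat.card ↥(B ⊓ E) := by
  obtain ⟨c, rfl⟩ := QuotientAddGroup.mk_surjective x
  -- Extract the coboundary condition from `hx`.
  rw [H1InMap, QuotientAddGroup.map_mk, QuotientAddGroup.eq_zero_iff,
    AddSubgroup.mem_addSubgroupOf] at hx
  obtain ⟨s, -, hcs⟩ := hx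
  have hcs' : ∀ g : G, c.1 g = g • s - s := hcs
  -- Decompose `s = b + e`.
  have hsBE : s ∈ B ⊔ E := hBE ▸ AddSubgroup.mem_top s
  obtain ⟨b, hb, e, he, hbe⟩ := AddSubgroup.mem_sup.mp hsBE
  -- The cocycle `g ↦ g • e - e` has values in `B ⊓ E`.
  set dfun : G → A := fun g => g • e - e with hdfun
  have hdec : ∀ g : G, dfun g = c.1 g - (g • b - b) := by
    intro g
    rw [hcs' g, ← hbe, smul_add, hdfun]
    abel
  have hdB : ∀ g : G, dfun g ∈ B := fun g => by
    rw [hdec g]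
    exact B.sub_mem (c.2.1 g) (B.sub_mem (hB g b hb) hb)
  have hdE : ∀ g : G, dfun g ∈ E := fun g => E.sub_mem (hE g e he) he
  have hdcoc : dfun ∈ cocyclesIn G A B := by
    refine ⟨hdB, fun g h => ?_⟩
    simp only [hdfun, mul_smul, smul_sub]
    abel
  set d : ↥(cocyclesIn G A B) := ⟨dfun, hdcoc⟩ with hd
  -- `mk c = mk d` in `H¹(G, B)`.
  have hxd : (QuotientAddGroup.mk c : H1In G A B) = QuotientAddGroup.mk d := by
    rw [QuotientAddGroup.eq, AddSubgroup.mem_addSubgroupOf]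
    refine ⟨-b, B.neg_mem hb, fun g => ?_⟩
    show -(c.1 g) + dfun g = g • (-b) - (-b)
    rw [hdec g, smul_neg]
    abel
  set n : ℕ := Nat.card ↥(B ⊓ E) with hn
  -- `n • d = 0` since `d` has values in the finite group `B ⊓ E`.
  have hnd : n • d = 0 := by
    ext g
    show n • dfun g = 0
    have : n • (⟨dfun g, ⟨hdB g, hdE g⟩⟩ : ↥(B ⊓ E)) = 0 := card_nsmul_eq_zero'
    simpa using congrArg (Subtype.val) this
  have hnx : n • (QuotientAddGroup.mk c : H1In G A B) = 0 := by
    rw [hxd, ← QuotientAddGroup.mk_nsmul, hnd]; rfl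
  exact dvd_trans hqx (addOrderOf_dvd_of_nsmul_eq_zero hnx)
end
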